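/- arXiv:1809.04006 — 2 statements merged into one kernel-verified Lean document; each statement's English description precedes it below -/
import Mathlib

section
/- Let δ > 1, 0 < γ < M, and let ŷ be the smaller fixed point of g(y) = y^δ + γ. Then ŷ < γδ/(δ−1). -/
theorem yhat_bound (δ γ : ℝ) (hδ : 1 < δ) (hγ : 0 < γ)
    (hγM : γ < δ ^ ((1:ℝ)/(1-δ)) - δ ^ (δ/(1-δ)))
    (yhat : ℝ) (h1 : 0 < yhat) (h2 : yhat < δ ^ ((1:ℝ)/(1-δ)))
    (hfix : yhat ^ δ + γ = yhat) :
    yhat < γ * δ / (δ - 1) := by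
  have hδ0 : (0:ℝ) < δ := by linarith
  have hδ1 : (0:ℝ) < δ - 1 := by linarith
  -- raise h2 to power δ - 1
  have hkey : yhat ^ (δ - 1) < δ⁻¹ := by
    have := Real.rpow_lt_rpow h1.le h2 hδ1
    rwa [← Real.rpow_mul hδ0.le,
      show (1:ℝ)/(1-δ) * (δ-1) = -1 by rw [div_mul_eq_mul_div, one_mul, div_eq_iff (by linarith : (1:ℝ)-δ ≠ 0)]; ring,
      Real.rpow_neg_one] at this
  have hsplit : yhat ^ δ = yhat * yhat ^ (δ - 1) := by
    nth_rewrite 1 [show δ = 1 + (δ-1) by ring]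
    rw [Real.rpow_add h1, Real.rpow_one]
  have hmain : δ * yhat ^ δ < yhat := by
    rw [hsplit]
    calc δ * (yhat * yhat ^ (δ - 1)) < δ * (yhat * δ⁻¹) := by
          apply mul_lt_mul_of_pos_left _ hδ0
          exact mul_lt_mul_of_pos_left hkey h1
      _ = yhat := by field_simp
  rw [lt_div_iff₀ hδ1]
  nlinarith [hfix]
end

section
/- Let K > 0, δ > 1, γ > 0, k₁ ∈ (0,1), ω > 0. If M < γ(1−k₁), where M = δ^{1/(1−δ)} − δ^{δ/(1−δ)}, then for every T > 0 the map G_T(s,y) = (s − K ln y − T, y^δ + γ(1 + k₁ sin(2ωs))) has no fixed point with y > 0. -/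
lemma key_sub_rpow_le {δ : ℝ} (hδ : 1 < δ) {y : ℝ} (hy : 0 < y) :
    y - y ^ δ ≤ δ ^ ((1:ℝ)/(1-δ)) - δ ^ (δ/(1-δ)) := by
  have hδ0 : (0:ℝ) < δ := by linarith
  have hne : (1:ℝ) - δ ≠ 0 := by intro h; nlinarith
  set c : ℝ := δ ^ ((1:ℝ)/(1-δ)) with hc
  have hcpos : 0 < c := Real.rpow_pos_of_pos hδ0 _
  have hcδ : c ^ δ = δ ^ (δ / (1-δ)) := by
    rw [hc, ← Real.rpow_mul hδ0.le]
    ring_nf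
  have hcc : c = δ * c ^ δ := by
    rw [hcδ, hc, ← Real.rpow_one_add' hδ0.le]
    · congr 1; field_simp; ring
    · field_simp; rw [show (1:ℝ) - δ + δ = 1 by ring]; exact div_ne_zero one_ne_zero hne
  have hs : -1 ≤ y / c - 1 := by
    have := div_pos hy hcpos; linarith
  have hber := one_add_mul_self_le_rpow_one_add hs hδ.le
  rw [show (1 + (y / c - 1)) = y / c by ring] at hber
  rw [Real.div_rpow hy.le hcpos.le] at hber
  have hcδpos : 0 < c ^ δ := Real.rpow_pos_of_pos hcpos _
  have h2 := mul_le_mul_of_nonneg_left hber hcδpos.le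
  rw [mul_div_cancel₀ _ (ne_of_gt hcδpos)] at h2
  have hyc : δ * c ^ δ * (y / c) = y := by
    rw [← hcc, mul_div_cancel₀ _ (ne_of_gt hcpos)]
  rw [← hcδ]
  nlinarith [h2, hyc]

theorem no_fixed_points (K δ γ k₁ ω : ℝ)
    (hK : 0 < K) (hδ : 1 < δ) (hγ : 0 < γ) (hk₁ : 0 < k₁) (hk₁' : k₁ < 1) (hω : 0 < ω)
    (hM : δ ^ ((1:ℝ)/(1-δ)) - δ ^ (δ/(1-δ)) < γ * (1 - k₁)) :
    ∀ T : ℝ, 0 < T → ¬ ∃ s y : ℝ, 0 < y ∧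
      s - K * Real.log y - T = s ∧
      y ^ δ + γ * (1 + k₁ * Real.sin (2*ω*s)) = y := by
  intro T hT
  rintro ⟨s, y, hy, _, h2⟩
  have hsin : -1 ≤ Real.sin (2*ω*s) := Real.neg_one_le_sin _
  have hge : γ * (1 - k₁) ≤ y - y ^ δ := by nlinarith [mul_nonneg (mul_nonneg hγ.le hk₁.le) (by linarith : (0:ℝ) ≤ Real.sin (2*ω*s) + 1)]
  have := key_sub_rpow_le hδ hy
  linarith
end
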